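/- The function h(x) := x·e^x/(e^x − 1) is strictly increasing on the interval (0, ∞). -/

import Mathlib

open Real

lemma h_hasDerivAt {x : ℝ} (hx : 0 < x) :
    HasDerivAt (fun x : ℝ => x * Real.exp x / (Real.exp x - 1))
      (((Real.exp x + x * Real.exp x) * (Real.exp x - 1) - x * Real.exp x * Real.exp x) /
        (Real.exp x - 1) ^ 2) x := by
  have hne : Real.exp x - 1 ≠ 0 := by
    have : 1 < Real.exp x := Real.one_lt_exp_iff.mpr hx
    linarith
  have hu : HasDerivAt (fun x : ℝ => x * Real.exp x) (1 * Real.exp x + x * Real.exp x) x :=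
    (hasDerivAt_id x).mul (Real.hasDerivAt_exp x)
  have hv : HasDerivAt (fun x : ℝ => Real.exp x - 1) (Real.exp x) x := by
    simpa using (Real.hasDerivAt_exp x).sub_const 1
  simpa [one_mul, Pi.div_def] using hu.div hv hne

/-- The function `h(x) = x·e^x/(e^x - 1)` is strictly increasing on `(0, ∞)`. -/
theorem strictMonoOn_h :
    StrictMonoOn (fun x : ℝ => x * Real.exp x / (Real.exp x - 1)) (Set.Ioi (0 : ℝ)) := by
  have hconv : Convex ℝ (Set.Ioi (0 : ℝ)) := convex_Ioi 0
  apply StrictMonoOn.mono (s := Set.Ioi (0:ℝ))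
    (strictMonoOn_of_hasDerivWithinAt_pos hconv ?_ (f' := fun x =>
      (((Real.exp x + x * Real.exp x) * (Real.exp x - 1) - x * Real.exp x * Real.exp x) /
        (Real.exp x - 1) ^ 2)) ?_ ?_) le_rfl
  · intro x hx
    exact ((h_hasDerivAt hx).continuousAt).continuousWithinAt
  · intro x hx
    rw [interior_Ioi] at hx
    exact ((h_hasDerivAt hx).hasDerivWithinAt)
  · intro x hx
    rw [interior_Ioi] at hx
    have h1 : 1 + x < Real.exp x := by
      have := Real.add_one_lt_exp (ne_of_gt hx)
      linarith
    have hex : 0 < Real.exp x := Real.exp_pos x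
    have hnum : 0 < (Real.exp x + x * Real.exp x) * (Real.exp x - 1) - x * Real.exp x * Real.exp x := by
      have : (Real.exp x + x * Real.exp x) * (Real.exp x - 1) - x * Real.exp x * Real.exp x
          = Real.exp x * (Real.exp x - 1 - x) := by ring
      rw [this]
      exact mul_pos hex (by linarith)
    have h1' : 1 < Real.exp x := Real.one_lt_exp_iff.mpr hx
    have hd : 0 < (Real.exp x - 1) ^ 2 := pow_pos (by linarith) 2
    exact div_pos hnum hd
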